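/- (Garland's estimate.) Let X be a finite pure k-dimensional simplicial complex (k ≥ 1) such that every (k−1)-simplex of X is contained in exactly m k-simplices of X. Let λ(X) = min{ λ₂(lk(X,τ)) : τ ∈ X(k−2) }, where for τ ∈ X(k−2) the link lk(X,τ) is a graph. Then for every φ ∈ C^{k−1}(X) with d_{k−2}^* φ = 0 one has ‖d_{k−1}φ‖² ≥ (k·λ(X) − (k−1)m)·‖φ‖². Equivalently, min{ ‖d_{k−1}φ‖²/‖φ‖² : 0 ≠ φ ∈ ker d_{k−2}^* } ≥ k·λ(X) − (k−1)m. -/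

import Mathlib

open Finset

namespace BCC

/-! ### Simplicial cochain machinery.

A finite simplicial complex on a linearly ordered finite vertex type `V` is encoded as a
`Finset (Finset V)` of faces (downward closure is assumed as a hypothesis where needed;
the empty face plays the role of the `(-1)`-dimensional simplex, so that the cochain
complex below is the *augmented* (reduced) one).

A skew-symmetric real-valued function on ordered `j`-simplices is determined by its values
on the increasingly-ordered simplices, so `C^j(X)` is encoded as the space of real functions
on the faces of cardinality `j+1`.  Thus `Cochain X m` is `C^{m-1}(X)`, and `d X m` is the
coboundary `d_{m-1} : C^{m-1}(X) → C^m(X)`; in particular `d X 0` is the augmentation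
`d_{-1} : C^{-1}(X) = ℝ → C^0(X)`, `(d_{-1} a)(v) = a`.  `dStar X m` is the adjoint of
`d X m` with respect to the standard inner products `(φ, ψ) = ∑_{σ ∈ X(j)} φ(σ)ψ(σ)`,
written out explicitly. -/

/-- `C^{m-1}(X)`: real cochains supported on the faces of cardinality `m`. -/
abbrev Cochain {V : Type*} [Fintype V] [LinearOrder V] (X : Finset (Finset V)) (m : ℕ) :
    Type _ :=
  {s : Finset V // s ∈ X ∧ s.card = m} → ℝ

section Ordered
variable {V : Type*} [Fintype V] [LinearOrder V]

/-- The sign `(-1)^i` of the vertex `v` in the increasingly ordered simplex `σ`,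
where `i` is the position of `v` in `σ`. -/
noncomputable def sgn (σ : Finset V) (v : V) : ℝ :=
  (-1 : ℝ) ^ (σ.filter fun w => w < v).card

/-- The simplicial coboundary `d_{m-1} : C^{m-1}(X) → C^m(X)`,
`(dφ)(σ) = ∑_{i} (-1)^i φ(σ_i)`. -/
noncomputable def d (X : Finset (Finset V)) (m : ℕ) :
    Cochain X m →ₗ[ℝ] Cochain X (m + 1) where
  toFun φ := fun σ => ∑ v ∈ σ.1, sgn σ.1 v *
    (if h : σ.1.erase v ∈ X ∧ (σ.1.erase v).card = m then φ ⟨σ.1.erase v, h⟩ else 0)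
  map_add' φ ψ := by
    funext σ
    show (∑ v ∈ σ.1, (_ : ℝ)) = (∑ v ∈ σ.1, (_ : ℝ)) + (∑ v ∈ σ.1, (_ : ℝ))
    rw [← Finset.sum_add_distrib]
    refine Finset.sum_congr rfl fun v hv => ?_
    split
    · show sgn σ.1 v * (φ _ + ψ _) = _; ring
    · ring
  map_smul' c φ := by
    funext σ
    show (∑ v ∈ σ.1, _) = c * (∑ v ∈ σ.1, _)
    rw [Finset.mul_sum]
    refine Finset.sum_congr rfl fun v hv => ?_
    split
    · show sgn σ.1 v * (c * φ _) = _; ring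
    · ring

/-- The adjoint `d_{m-1}^* : C^m(X) → C^{m-1}(X)` of the coboundary `d X m` with respect to
the standard inner products, written out explicitly:
`(d^*ψ)(τ) = ∑_{v ∉ τ, τ ∪ {v} ∈ X} ± ψ(τ ∪ {v})`. -/
noncomputable def dStar (X : Finset (Finset V)) (m : ℕ) :
    Cochain X (m + 1) →ₗ[ℝ] Cochain X m where
  toFun ψ := fun τ => ∑ v ∈ τ.1ᶜ, sgn (insert v τ.1) v *
    (if h : insert v τ.1 ∈ X ∧ (insert v τ.1).card = m + 1 then ψ ⟨insert v τ.1, h⟩ else 0)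
  map_add' φ ψ := by
    funext τ
    show (∑ v ∈ τ.1ᶜ, (_ : ℝ)) = (∑ v ∈ τ.1ᶜ, (_ : ℝ)) + (∑ v ∈ τ.1ᶜ, (_ : ℝ))
    rw [← Finset.sum_add_distrib]
    refine Finset.sum_congr rfl fun v hv => ?_
    split
    · show sgn _ v * (φ _ + ψ _) = _; ring
    · ring
  map_smul' c φ := by
    funext τ
    show (∑ v ∈ τ.1ᶜ, _) = c * (∑ v ∈ τ.1ᶜ, _)
    rw [Finset.mul_sum]
    refine Finset.sum_congr rfl fun v hv => ?_
    split
    · show sgn _ v * (c * φ _) = _; ring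
    · ring

/-- The squared norm `‖φ‖² = ∑_{σ ∈ X(j)} φ(σ)²` of a cochain. -/
noncomputable def normSq {X : Finset (Finset V)} {m : ℕ} (φ : Cochain X m) : ℝ :=
  ∑ s, φ s ^ 2

/-- The reduced `m`-th Laplacian `L_m = d_{m-1} d_{m-1}^* + d_m^* d_m`
acting on `C^m(X) = Cochain X (m+1)`. -/
noncomputable def Lap (X : Finset (Finset V)) (m : ℕ) :
    Cochain X (m + 1) →ₗ[ℝ] Cochain X (m + 1) :=
  (d X m) ∘ₗ (dStar X m) + (dStar X (m + 1)) ∘ₗ (d X (m + 1))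

/-- The `m`-th spectral gap `μ_m(X)`: the minimal eigenvalue of the reduced `m`-th
Laplacian `L_m` acting on `C^m(X)`. -/
noncomputable def mu (X : Finset (Finset V)) (m : ℕ) : ℝ :=
  sInf {μ : ℝ | Module.End.HasEigenvalue (Lap X m) μ}

/-- The dimension of the `j`-th reduced real cohomology `H̃^j(X;ℝ) = ker d_j / im d_{j-1}`
of the augmented cochain complex of `X`. -/
noncomputable def cohomDim (X : Finset (Finset V)) (j : ℕ) : ℕ :=
  Module.finrank ℝ
    (↥(LinearMap.ker (d X (j + 1))) ⧸
      (LinearMap.range (d X j)).comap (LinearMap.ker (d X (j + 1))).subtype)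

/-! ### Links and `λ₂` of link graphs -/

/-- The vertex set of the link `lk(X,τ)` of the face `τ`. -/
def linkVerts (X : Finset (Finset V)) (τ : Finset V) : Finset V :=
  univ.filter (fun v => v ∉ τ ∧ insert v τ ∈ X)

/-- The Dirichlet energy `‖d₀ f‖² = ∑_{{u,v} ∈ lk(X,τ)(1)} (f v - f u)²` of a function `f`
on the vertices of the link graph `lk(X,τ)` (each unordered edge counted once). -/
noncomputable def linkEnergy (X : Finset (Finset V)) (τ : Finset V) (f : V → ℝ) : ℝ :=
  (1 / 2) * ∑ u : V, ∑ v : V,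
    if u ≠ v ∧ u ∉ τ ∧ v ∉ τ ∧ insert u (insert v τ) ∈ X then (f v - f u) ^ 2 else 0

/-- The second smallest eigenvalue `λ₂` of the Laplacian of the link graph `lk(X,τ)`,
via its variational characterization: the infimum of the Rayleigh quotients
`‖d₀ f‖²/‖f‖²` over nonzero functions `f` on the link vertices with `∑_v f(v) = 0`. -/
noncomputable def linkLambda2 (X : Finset (Finset V)) (τ : Finset V) : ℝ :=
  sInf {r : ℝ | ∃ f : V → ℝ, (∀ v, v ∉ linkVerts X τ → f v = 0) ∧ (∑ v, f v) = 0 ∧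
    f ≠ 0 ∧ r = linkEnergy X τ f / ∑ v, f v ^ 2}

/-- The localization `φ_τ` of a cochain `φ ∈ C^{m-1}(X)` to the link of a face `τ` with
`|τ| = m - 1` : `φ_τ(v) = φ(vτ)` (expressed through the chosen increasing orientations). -/
noncomputable def restrictLink (X : Finset (Finset V)) {m : ℕ} (φ : Cochain X m)
    (τ : Finset V) : V → ℝ :=
  fun v => if h : v ∉ τ ∧ insert v τ ∈ X ∧ (insert v τ).card = m then
    sgn (insert v τ) v * φ ⟨insert v τ, h.2.1, h.2.2⟩ else 0

end Ordered

section Graphs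
variable {V : Type*} [DecidableEq V]

/-- The link `lk(X,τ)` of a codimension-2 face, as a simple graph on its vertex set. -/
def linkGraph (X : Finset (Finset V)) (τ : Finset V) :
    SimpleGraph {v : V // v ∉ τ ∧ insert v τ ∈ X} where
  Adj u v := u ≠ v ∧ insert u.1 (insert v.1 τ) ∈ X
  symm := ⟨by
    rintro u v ⟨h1, h2⟩
    exact ⟨h1.symm, by rwa [Finset.insert_comm] at h2⟩⟩
  loopless := ⟨fun u h => h.1 rfl⟩

/-- The bipartite Cayley graph `C_A` on `{1,2} × G` (encoded as `Fin 2 × G`), with an edge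
between `(1,x₁)` and `(2,x₂)` whenever `x₁ x₂ ∈ A`. -/
def cayleyGraph (G : Type*) [Group G] [DecidableEq G] (A : Finset G) :
    SimpleGraph (Fin 2 × G) where
  Adj u v := (u.1 = 0 ∧ v.1 = 1 ∧ u.2 * v.2 ∈ A) ∨ (v.1 = 0 ∧ u.1 = 1 ∧ v.2 * u.2 ∈ A)
  symm := by tauto
  loopless := ⟨by
    rintro ⟨i, x⟩ (⟨h0, h1, -⟩ | ⟨h0, h1, -⟩) <;> rw [h0] at h1 <;> exact absurd h1 (by decide)⟩

/-- The disjoint union of `ℓ` copies of a graph `H`. -/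
def copies (ℓ : ℕ) {α : Type*} (H : SimpleGraph α) : SimpleGraph (Fin ℓ × α) where
  Adj u v := u.1 = v.1 ∧ H.Adj u.2 v.2
  symm := ⟨by rintro u v ⟨h1, h2⟩; exact ⟨h1.symm, h2.symm⟩⟩
  loopless := ⟨fun u h => H.loopless.1 u.2 h.2⟩

end Graphs

/-! ### The complexes `Y_{G,k}` and `Y_{A,k}` -/

/-- The balanced complex `Y_{G,k}`, i.e. the simplicial join `V_1 * ⋯ * V_{k+1}` where
`V_i = {i} × G`: its faces are exactly the subsets of `Fin (k+1) × G` containing at most one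
vertex of each colour `i : Fin (k+1)`. -/
def YG (G : Type*) [Fintype G] [DecidableEq G] (k : ℕ) :
    Finset (Finset (Fin (k + 1) × G)) :=
  (univ : Finset (Finset (Fin (k + 1) × G))).filter
    (fun s => ∀ x ∈ s, ∀ y ∈ s, Prod.fst x = Prod.fst y → x = y)

/-- The balanced `k`-dimensional Cayley complex `Y_{A,k}`: the full `(k-1)`-skeleton of
`Y_{G,k}` together with all `k`-simplices `{(1,x_1),…,(k+1,x_{k+1})}` such that
`x_1 ⋯ x_{k+1} ∈ A` (the ordered product is taken along the colours `1,…,k+1`). -/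
def YA (G : Type*) [Group G] [Fintype G] [DecidableEq G] (k : ℕ) (A : Finset G) :
    Finset (Finset (Fin (k + 1) × G)) :=
  (YG G k).filter (fun s => s.card ≤ k ∨
    ∃ x : Fin (k + 1) → G, s = univ.image (fun i => (i, x i)) ∧ (List.ofFn x).prod ∈ A)

/-! ### Unitary representations, `ν(A)` and `D(G)` -/

variable {G : Type*} [Group G]

/-- A unitary matrix representation `ρ : G → U(d)` is irreducible if `d > 0` and the only
invariant subspaces of `ℂ^d` are `⊥` and `⊤`. -/
def IsIrred {d : ℕ} (ρ : G →* Matrix.unitaryGroup (Fin d) ℂ) : Prop :=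
  0 < d ∧ ∀ W : Submodule ℂ (EuclideanSpace ℂ (Fin d)),
    (∀ g : G, ∀ v ∈ W, Matrix.toEuclideanLin (ρ g : Matrix (Fin d) (Fin d) ℂ) v ∈ W) →
      W = ⊥ ∨ W = ⊤

/-- A matrix representation is nontrivial if it is not identically the identity. -/
def IsNontrivialRep {d : ℕ} (ρ : G →* Matrix.unitaryGroup (Fin d) ℂ) : Prop :=
  ∃ g : G, (ρ g : Matrix (Fin d) (Fin d) ℂ) ≠ 1

/-- The operator (spectral) norm of a complex `d × d` matrix. -/
noncomputable def opNorm {d : ℕ} (M : Matrix (Fin d) (Fin d) ℂ) : ℝ :=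
  ‖Matrix.toEuclideanCLM (𝕜 := ℂ) M‖

/-- The Fourier transform `1̂_A(ρ) = ∑_{x ∈ A} ρ(x)` of the indicator of `A` at `ρ`. -/
noncomputable def fourier {d : ℕ} (ρ : G →* Matrix.unitaryGroup (Fin d) ℂ) (A : Finset G) :
    Matrix (Fin d) (Fin d) ℂ :=
  ∑ a ∈ A, (ρ a : Matrix (Fin d) (Fin d) ℂ)

/-- `ν(A) = max_{ρ ∈ Ĝ₊} ‖1̂_A(ρ)‖`: the supremum of the operator norms `‖∑_{x ∈ A} ρ(x)‖`
over all nontrivial irreducible unitary matrix representations of `G` (this agrees with the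
maximum over any complete set `Ĝ₊` of pairwise inequivalent nontrivial irreducible unitary
representations, since equivalent irreducible unitary representations are unitarily
equivalent and hence give the same norm). -/
noncomputable def nu (G : Type*) [Group G] (A : Finset G) : ℝ :=
  sSup {x : ℝ | ∃ (d : ℕ) (ρ : G →* Matrix.unitaryGroup (Fin d) ℂ),
    IsIrred ρ ∧ IsNontrivialRep ρ ∧ x = opNorm (fourier ρ A)}

/-- Equivalence of two unitary matrix representations: an invertible intertwiner. -/
def RepEquiv {d₁ d₂ : ℕ} (ρ₁ : G →* Matrix.unitaryGroup (Fin d₁) ℂ)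
    (ρ₂ : G →* Matrix.unitaryGroup (Fin d₂) ℂ) : Prop :=
  ∃ T : Matrix (Fin d₂) (Fin d₁) ℂ, Function.Bijective T.mulVecLin ∧
    ∀ g : G, T * (ρ₁ g : Matrix (Fin d₁) (Fin d₁) ℂ) = (ρ₂ g : Matrix (Fin d₂) (Fin d₂) ℂ) * T

/-- `(dims, ρs)` is a complete family of irreducible unitary representations of `G`:
each member is irreducible, they are pairwise inequivalent, and every irreducible unitary
matrix representation of `G` is equivalent to some member.  Such a family realizes `Ĝ`,
and the sum of the degrees of the irreducible representations is `D(G) = ∑ i, dims i`. -/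
def IsCompleteIrrepFamily (G : Type*) [Group G] {ι : Type} (dims : ι → ℕ)
    (ρs : ∀ i : ι, G →* Matrix.unitaryGroup (Fin (dims i)) ℂ) : Prop :=
  (∀ i, IsIrred (ρs i)) ∧
  (∀ i j, i ≠ j → ¬ RepEquiv (ρs i) (ρs j)) ∧
  (∀ (d : ℕ) (π : G →* Matrix.unitaryGroup (Fin d) ℂ), IsIrred π → ∃ i, RepEquiv π (ρs i))

end BCC

open BCC

namespace Garland

variable {V : Type} [Fintype V] [LinearOrder V]

/-- Extension of a cochain by zero to all finsets. -/
noncomputable def Phi (X : Finset (Finset V)) (n : ℕ) (φ : Cochain X n) : Finset V → ℝ :=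
  fun s => if h : s ∈ X ∧ s.card = n then φ ⟨s, h⟩ else 0

lemma sum_subtype_eq (X : Finset (Finset V)) (n : ℕ) (g : Finset V → ℝ) :
    ∑ s : {s : Finset V // s ∈ X ∧ s.card = n}, g s.1
      = ∑ s ∈ univ.filter (fun s => s ∈ X ∧ s.card = n), g s :=
  (Finset.sum_subtype _ (fun x => by simp) g).symm

lemma normSq_eq (X : Finset (Finset V)) (n : ℕ) (φ : Cochain X n) :
    normSq φ = ∑ s ∈ univ.filter (fun s => s ∈ X ∧ s.card = n), (Phi X n φ s) ^ 2 := by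
  rw [← sum_subtype_eq X n (fun s => (Phi X n φ s) ^ 2)]
  refine Finset.sum_congr rfl fun a _ => ?_
  simp only [Phi, dif_pos a.2]

lemma sum_Phi_sq (X : Finset (Finset V)) (n : ℕ) (φ : Cochain X n) :
    ∑ s : Finset V, (Phi X n φ s) ^ 2 = normSq φ := by
  rw [normSq_eq X n φ]
  refine (Finset.sum_subset (Finset.filter_subset _ _) fun x _ hx => ?_).symm
  have : ¬ (x ∈ X ∧ x.card = n) := by simpa using hx
  simp [Phi, dif_neg this]

lemma sgn_erase (σ : Finset V) (v w : V) (hw : w ∈ σ) :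
    sgn σ v = sgn (σ.erase w) v * (if w < v then -1 else 1) := by
  unfold sgn
  rw [Finset.filter_erase]
  by_cases h : w < v
  · have hwm : w ∈ σ.filter (fun x => x < v) := Finset.mem_filter.2 ⟨hw, h⟩
    rw [if_pos h, ← Finset.card_erase_add_one hwm, pow_succ]
  · have hwm : w ∉ σ.filter (fun x => x < v) := fun hc => h (Finset.mem_filter.1 hc).2
    rw [if_neg h, Finset.erase_eq_of_notMem hwm, mul_one]

lemma sgn_mul (σ : Finset V) (v w : V) (hv : v ∈ σ) (hw : w ∈ σ) (hvw : v ≠ w) :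
    sgn σ v * sgn σ w = -(sgn (σ.erase w) v * sgn (σ.erase v) w) := by
  rw [sgn_erase σ v w hw, sgn_erase σ w v hv]
  rcases lt_or_gt_of_ne hvw with h | h
  · rw [if_neg (asymm h), if_pos h]; ring
  · rw [if_pos h, if_neg (asymm h)]; ring

lemma count_eq (X : Finset (Finset V)) (k m : ℕ)
    (hdeg : ∀ σ ∈ X, σ.card = k → (X.filter fun η => σ ⊆ η ∧ η.card = k + 1).card = m)
    (σ : Finset V) (hσ : σ ∈ X) (hc : σ.card = k)
    (s : Finset V) (hs : ∀ v, v ∈ s ↔ v ∉ σ ∧ insert v σ ∈ X) : s.card = m := by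
  rw [← hdeg σ hσ hc]
  refine Finset.card_bij (fun v _ => insert v σ) ?_ ?_ ?_
  · intro v hv
    obtain ⟨hv1, hv2⟩ := (hs v).1 hv
    exact Finset.mem_filter.2 ⟨hv2, Finset.subset_insert _ _,
      by rw [Finset.card_insert_of_notMem hv1, hc]⟩
  · intro a ha b hb hab
    have ha1 := ((hs a).1 ha).1
    have hab' : insert a σ = insert b σ := hab
    have : a ∈ insert b σ := by rw [← hab']; exact Finset.mem_insert_self a σ
    rcases Finset.mem_insert.1 this with h | h
    · exact h
    · exact absurd h ha1
  · intro η hη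
    have hη' := Finset.mem_filter.1 hη
    have hηX := hη'.1
    have hση := hη'.2.1
    have hηc := hη'.2.2
    have hcard : (η \ σ).card = 1 := by
      rw [Finset.card_sdiff_of_subset hση, hηc, hc]; simp
    obtain ⟨v, hv⟩ := Finset.card_eq_one.1 hcard
    have hvd : v ∈ η \ σ := hv ▸ Finset.mem_singleton_self v
    have hvη : v ∈ η := (Finset.mem_sdiff.1 hvd).1
    have hvσ : v ∉ σ := (Finset.mem_sdiff.1 hvd).2
    have heq : insert v σ = η := by
      apply Finset.Subset.antisymm (Finset.insert_subset hvη hση)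
      intro x hx
      by_cases hxσ : x ∈ σ
      · exact Finset.mem_insert_of_mem hxσ
      · have : x ∈ η \ σ := Finset.mem_sdiff.2 ⟨hx, hxσ⟩
        rw [hv, Finset.mem_singleton] at this
        exact this ▸ Finset.mem_insert_self v σ
    exact ⟨v, (hs v).2 ⟨hvσ, heq ▸ hηX⟩, heq⟩

lemma pair_reindex (Q : Finset V → Prop) [DecidablePred Q] (F : Finset V → V → ℝ) :
    ∑ σ ∈ univ.filter Q, ∑ v ∈ σ, F (σ.erase v) v
      = ∑ τ : Finset V, ∑ v ∈ τᶜ, if Q (insert v τ) then F τ v else 0 := by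
  have hrhs : (∑ τ : Finset V, ∑ v ∈ τᶜ, if Q (insert v τ) then F τ v else 0)
      = ∑ τ : Finset V, ∑ v ∈ τᶜ.filter (fun v => Q (insert v τ)), F τ v := by
    refine Finset.sum_congr rfl fun τ _ => ?_
    rw [Finset.sum_filter]
  rw [hrhs, Finset.sum_sigma' (univ.filter Q) (fun σ => σ) (fun σ v => F (σ.erase v) v),
    Finset.sum_sigma' univ _ (fun τ v => F τ v)]
  refine Finset.sum_nbij' (fun x => ⟨x.1.erase x.2, x.2⟩) (fun x => ⟨insert x.2 x.1, x.2⟩)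
    ?_ ?_ ?_ ?_ ?_
  · rintro ⟨σ, v⟩ hx
    rw [Finset.mem_sigma] at hx ⊢
    obtain ⟨h1, h2⟩ := hx
    have hQ : Q σ := (Finset.mem_filter.1 h1).2
    refine ⟨Finset.mem_univ _, Finset.mem_filter.2 ⟨Finset.mem_compl.2 (Finset.notMem_erase _ _), ?_⟩⟩
    rwa [Finset.insert_erase h2]
  · rintro ⟨τ, v⟩ hx
    rw [Finset.mem_sigma] at hx ⊢
    obtain ⟨-, h2⟩ := hx
    obtain ⟨hvc, hQ⟩ := Finset.mem_filter.1 h2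
    exact ⟨Finset.mem_filter.2 ⟨Finset.mem_univ _, hQ⟩, Finset.mem_insert_self _ _⟩
  · rintro ⟨σ, v⟩ hx
    rw [Finset.mem_sigma] at hx
    have : insert v (σ.erase v) = σ := Finset.insert_erase hx.2
    simp [this]
  · rintro ⟨τ, v⟩ hx
    rw [Finset.mem_sigma] at hx
    have hv : v ∉ τ := Finset.mem_compl.1 (Finset.mem_filter.1 hx.2).1
    have : (insert v τ).erase v = τ := Finset.erase_insert hv
    simp [this]
  · rintro ⟨σ, v⟩ _
    rfl

lemma triple_reindex (Q : Finset V → Prop) [DecidablePred Q] (H : Finset V → V → V → ℝ) :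
    ∑ σ ∈ univ.filter Q, ∑ v ∈ σ, ∑ w ∈ σ.erase v, H ((σ.erase v).erase w) v w
      = ∑ τ : Finset V, ∑ v : V, ∑ w : V,
          if v ≠ w ∧ v ∉ τ ∧ w ∉ τ ∧ Q (insert v (insert w τ)) then H τ v w else 0 := by
  have hrhs : (∑ τ : Finset V, ∑ v : V, ∑ w : V,
        if v ≠ w ∧ v ∉ τ ∧ w ∉ τ ∧ Q (insert v (insert w τ)) then H τ v w else 0)
      = ∑ τ : Finset V, ∑ v : V,
          ∑ w ∈ univ.filter (fun w => v ≠ w ∧ v ∉ τ ∧ w ∉ τ ∧ Q (insert v (insert w τ))),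
            H τ v w := by
    refine Finset.sum_congr rfl fun τ _ => Finset.sum_congr rfl fun v _ => ?_
    rw [Finset.sum_filter]
  rw [hrhs]
  have l1 : (∑ σ ∈ univ.filter Q, ∑ v ∈ σ, ∑ w ∈ σ.erase v, H ((σ.erase v).erase w) v w)
      = ∑ y ∈ (univ.filter Q).sigma (fun σ => σ.sigma (fun v => σ.erase v)),
          H ((y.1.erase y.2.1).erase y.2.2) y.2.1 y.2.2 := by
    rw [Finset.sum_sigma]
    exact Finset.sum_congr rfl fun σ _ => by rw [Finset.sum_sigma]
  have l2 : (∑ τ : Finset V, ∑ v : V,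
        ∑ w ∈ univ.filter (fun w => v ≠ w ∧ v ∉ τ ∧ w ∉ τ ∧ Q (insert v (insert w τ))),
          H τ v w)
      = ∑ y ∈ (univ : Finset (Finset V)).sigma (fun τ => (univ : Finset V).sigma
          (fun v => univ.filter (fun w => v ≠ w ∧ v ∉ τ ∧ w ∉ τ ∧ Q (insert v (insert w τ))))),
          H y.1 y.2.1 y.2.2 := by
    rw [Finset.sum_sigma]
    exact Finset.sum_congr rfl fun τ _ => by rw [Finset.sum_sigma]
  rw [l1, l2]
  refine Finset.sum_nbij' (fun y => ⟨(y.1.erase y.2.1).erase y.2.2, y.2.1, y.2.2⟩)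
    (fun y => ⟨insert y.2.1 (insert y.2.2 y.1), y.2.1, y.2.2⟩) ?_ ?_ ?_ ?_ ?_
  · rintro ⟨σ, v, w⟩ hy
    rw [Finset.mem_sigma] at hy
    obtain ⟨h1, h2⟩ := hy
    rw [Finset.mem_sigma] at h2
    obtain ⟨hv, hw⟩ := h2
    have hQ : Q σ := (Finset.mem_filter.1 h1).2
    have hwv : w ≠ v := (Finset.mem_erase.1 hw).1
    refine Finset.mem_sigma.2 ⟨Finset.mem_univ _, Finset.mem_sigma.2 ⟨Finset.mem_univ _,
      Finset.mem_filter.2 ⟨Finset.mem_univ _, hwv.symm,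
        fun hc => (Finset.notMem_erase v σ) (Finset.mem_of_mem_erase hc),
        Finset.notMem_erase _ _, ?_⟩⟩⟩
    rw [Finset.insert_erase hw, Finset.insert_erase hv]
    exact hQ
  · rintro ⟨τ, v, w⟩ hy
    rw [Finset.mem_sigma] at hy
    obtain ⟨-, h2⟩ := hy
    rw [Finset.mem_sigma] at h2
    obtain ⟨-, h3⟩ := h2
    obtain ⟨-, hne, hvτ, hwτ, hQ⟩ := Finset.mem_filter.1 h3
    refine Finset.mem_sigma.2 ⟨Finset.mem_filter.2 ⟨Finset.mem_univ _, hQ⟩,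
      Finset.mem_sigma.2 ⟨Finset.mem_insert_self _ _,
        Finset.mem_erase.2 ⟨hne.symm, Finset.mem_insert_of_mem (Finset.mem_insert_self _ _)⟩⟩⟩
  · rintro ⟨σ, v, w⟩ hy
    rw [Finset.mem_sigma] at hy
    obtain ⟨h1, h2⟩ := hy
    rw [Finset.mem_sigma] at h2
    obtain ⟨hv, hw⟩ := h2
    have h3 : insert v (insert w ((σ.erase v).erase w)) = σ := by
      rw [Finset.insert_erase hw, Finset.insert_erase hv]
    dsimp only
    rw [h3]
  · rintro ⟨τ, v, w⟩ hy
    rw [Finset.mem_sigma] at hy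
    obtain ⟨-, h2⟩ := hy
    rw [Finset.mem_sigma] at h2
    obtain ⟨-, h3⟩ := h2
    obtain ⟨-, hne, hvτ, hwτ, hQ⟩ := Finset.mem_filter.1 h3
    have h1 : v ∉ insert w τ := by
      simp only [Finset.mem_insert]
      rintro (h | h)
      · exact hne h
      · exact hvτ h
    have h4 : ((insert v (insert w τ)).erase v).erase w = τ := by
      rw [Finset.erase_insert h1, Finset.erase_insert hwτ]
    dsimp only
    rw [h4]
  · rintro ⟨σ, v, w⟩ _
    rfl

lemma sgn_sq (σ : Finset V) (v : V) : sgn σ v ^ 2 = 1 := by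
  unfold sgn
  rw [← pow_mul, mul_comm, pow_mul, neg_one_sq, one_pow]

section Main

variable (X : Finset (Finset V)) (j : ℕ) (φ : Cochain X (j + 1))

lemma restrict_eq (τ : Finset V) (v : V) :
    restrictLink X φ τ v
      = if v ∈ τ then 0 else sgn (insert v τ) v * Phi X (j + 1) φ (insert v τ) := by
  unfold restrictLink Phi
  by_cases hv : v ∈ τ
  · rw [if_pos hv, dif_neg]; tauto
  · rw [if_neg hv]
    by_cases h : insert v τ ∈ X ∧ (insert v τ).card = j + 1
    · rw [dif_pos ⟨hv, h.1, h.2⟩, dif_pos h]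
    · rw [dif_neg (by tauto), dif_neg h, mul_zero]

lemma restrict_cond {τ : Finset V} {v : V} (h : restrictLink X φ τ v ≠ 0) :
    v ∉ τ ∧ insert v τ ∈ X ∧ (insert v τ).card = j + 1 := by
  by_contra hc
  apply h
  unfold restrictLink
  rw [dif_neg hc]

lemma energy_nonneg (τ : Finset V) (g : V → ℝ) : 0 ≤ linkEnergy X τ g := by
  unfold linkEnergy
  refine mul_nonneg (by norm_num) ?_
  refine Finset.sum_nonneg fun u _ => Finset.sum_nonneg fun v _ => ?_
  split
  · exact sq_nonneg _
  · exact le_refl 0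

lemma sum_restrict_eq_zero (hdc : ∀ s ∈ X, ∀ t ⊆ s, t ∈ X)
    (hφ : dStar X j φ = 0) (τ : Finset V) (hτX : τ ∈ X) (hτc : τ.card = j) :
    ∑ v : V, restrictLink X φ τ v = 0 := by
  have hd := congrFun hφ ⟨τ, hτX, hτc⟩
  have hz : ∑ v ∈ τ, restrictLink X φ τ v = 0 :=
    Finset.sum_eq_zero fun v hv => by rw [restrict_eq, if_pos hv]
  rw [← Finset.sum_add_sum_compl τ, hz, zero_add]
  have : ∀ v ∈ τᶜ, restrictLink X φ τ v
      = sgn (insert v τ) v * (if h : insert v τ ∈ X ∧ (insert v τ).card = j + 1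
          then φ ⟨insert v τ, h⟩ else 0) := by
    intro v hv
    have hv' : v ∉ τ := Finset.mem_compl.1 hv
    rw [restrict_eq, if_neg hv']
    unfold Phi
    rfl
  rw [Finset.sum_congr rfl this]
  exact hd

lemma energy_lb (m : ℕ) (lam : ℝ) (hdc : ∀ s ∈ X, ∀ t ⊆ s, t ∈ X)
    (hlam : ∀ τ ∈ X, τ.card = j → lam ≤ linkLambda2 X τ)
    (hφ : dStar X j φ = 0) (τ : Finset V) :
    lam * ∑ v : V, restrictLink X φ τ v ^ 2 ≤ linkEnergy X τ (restrictLink X φ τ) := by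
  by_cases hf0 : restrictLink X φ τ = 0
  · have : ∑ v : V, restrictLink X φ τ v ^ 2 = 0 := by
      refine Finset.sum_eq_zero fun v _ => ?_
      rw [hf0]
      simp
    rw [this, mul_zero]
    exact energy_nonneg X τ _
  · obtain ⟨u, hu⟩ := Function.ne_iff.1 hf0
    have hu' : restrictLink X φ τ u ≠ 0 := hu
    have hcond := restrict_cond X j φ hu'
    have hτX : τ ∈ X := hdc _ hcond.2.1 τ (Finset.subset_insert _ _)
    have hτc : τ.card = j := by
      have h2 := hcond.2.2
      rw [Finset.card_insert_of_notMem hcond.1] at h2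
      omega
    have hN : 0 < ∑ v : V, restrictLink X φ τ v ^ 2 :=
      Finset.sum_pos' (fun i _ => sq_nonneg _) ⟨u, Finset.mem_univ u, by positivity⟩
    have hmem : linkEnergy X τ (restrictLink X φ τ) / ∑ v : V, restrictLink X φ τ v ^ 2
        ∈ {r : ℝ | ∃ f : V → ℝ, (∀ v, v ∉ linkVerts X τ → f v = 0) ∧ (∑ v, f v) = 0 ∧
            f ≠ 0 ∧ r = linkEnergy X τ f / ∑ v, f v ^ 2} := by
      refine ⟨restrictLink X φ τ, ?_, ?_, hf0, rfl⟩
      · intro v hv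
        by_contra hfv
        have hc := restrict_cond X j φ hfv
        exact hv (Finset.mem_filter.2 ⟨Finset.mem_univ _, hc.1, hc.2.1⟩)
      · exact sum_restrict_eq_zero X j φ hdc hφ τ hτX hτc
    have hbdd : BddBelow {r : ℝ | ∃ f : V → ℝ, (∀ v, v ∉ linkVerts X τ → f v = 0) ∧
        (∑ v, f v) = 0 ∧ f ≠ 0 ∧ r = linkEnergy X τ f / ∑ v, f v ^ 2} := by
      refine ⟨0, ?_⟩
      rintro r ⟨g, -, -, -, rfl⟩
      exact div_nonneg (energy_nonneg X τ g) (Finset.sum_nonneg fun v _ => sq_nonneg _)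
    have h2 : linkLambda2 X τ
        ≤ linkEnergy X τ (restrictLink X φ τ) / ∑ v : V, restrictLink X φ τ v ^ 2 :=
      csInf_le hbdd hmem
    exact (le_div_iff₀ hN).1 ((hlam τ hτX hτc).trans h2)

lemma sum_restrict_sq :
    ∑ τ : Finset V, ∑ v : V, restrictLink X φ τ v ^ 2 = ((j : ℝ) + 1) * normSq φ := by
  have step : ∀ τ : Finset V, (∑ v : V, restrictLink X φ τ v ^ 2)
      = ∑ v ∈ τᶜ, (if insert v τ ∈ X ∧ (insert v τ).card = j + 1
          then Phi X (j + 1) φ (insert v τ) ^ 2 else 0) := by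
    intro τ
    rw [← Finset.sum_add_sum_compl τ]
    have hz : ∑ v ∈ τ, restrictLink X φ τ v ^ 2 = 0 :=
      Finset.sum_eq_zero fun v hv => by rw [restrict_eq, if_pos hv]; ring
    rw [hz, zero_add]
    refine Finset.sum_congr rfl fun v hv => ?_
    have hv' : v ∉ τ := Finset.mem_compl.1 hv
    rw [restrict_eq X j φ, if_neg hv']
    by_cases h : insert v τ ∈ X ∧ (insert v τ).card = j + 1
    · rw [if_pos h, mul_pow, sgn_sq, one_mul]
    · rw [if_neg h]
      have hP : Phi X (j + 1) φ (insert v τ) = 0 := dif_neg h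
      rw [hP]
      ring
  rw [Finset.sum_congr rfl fun τ _ => step τ,
    ← pair_reindex (fun s => s ∈ X ∧ s.card = j + 1)
      (fun τ v => Phi X (j + 1) φ (insert v τ) ^ 2)]
  have step2 : ∀ σ ∈ univ.filter (fun s => s ∈ X ∧ s.card = j + 1),
      (∑ v ∈ σ, Phi X (j + 1) φ (insert v (σ.erase v)) ^ 2)
        = ((j : ℝ) + 1) * Phi X (j + 1) φ σ ^ 2 := by
    intro σ hσ
    have hc : σ.card = j + 1 := (Finset.mem_filter.1 hσ).2.2
    have he : ∀ v ∈ σ, Phi X (j + 1) φ (insert v (σ.erase v)) ^ 2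
        = Phi X (j + 1) φ σ ^ 2 := fun v hv => by rw [Finset.insert_erase hv]
    rw [Finset.sum_congr rfl he, Finset.sum_const, hc, nsmul_eq_mul]
    push_cast
    ring
  rw [Finset.sum_congr rfl step2, ← Finset.mul_sum, ← normSq_eq]

lemma diag_eq (m : ℕ)
    (hdeg : ∀ σ ∈ X, σ.card = j + 1 →
      (X.filter fun η => σ ⊆ η ∧ η.card = j + 1 + 1).card = m) :
    ∑ σ ∈ univ.filter (fun s => s ∈ X ∧ s.card = j + 1 + 1),
        ∑ v ∈ σ, Phi X (j + 1) φ (σ.erase v) ^ 2 = (m : ℝ) * normSq φ := by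
  rw [pair_reindex _ (fun τ v => Phi X (j + 1) φ τ ^ 2)]
  have step : ∀ τ : Finset V,
      (∑ v ∈ τᶜ, if insert v τ ∈ X ∧ (insert v τ).card = j + 1 + 1
          then Phi X (j + 1) φ τ ^ 2 else 0) = (m : ℝ) * Phi X (j + 1) φ τ ^ 2 := by
    intro τ
    rw [← Finset.sum_filter, Finset.sum_const, nsmul_eq_mul]
    by_cases h0 : Phi X (j + 1) φ τ = 0
    · rw [h0]; ring
    · have hP : τ ∈ X ∧ τ.card = j + 1 := by
        by_contra hc
        exact h0 (dif_neg hc)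
      congr 1
      have hcnt := count_eq X (j + 1) m hdeg τ hP.1 hP.2
        (τᶜ.filter (fun v => insert v τ ∈ X ∧ (insert v τ).card = j + 1 + 1)) ?_
      · exact_mod_cast hcnt
      · intro v
        simp only [Finset.mem_filter, Finset.mem_compl]
        constructor
        · rintro ⟨h1, h2, h3⟩
          exact ⟨h1, h2⟩
        · rintro ⟨h1, h2⟩
          exact ⟨h1, h2, by rw [Finset.card_insert_of_notMem h1, hP.2]⟩
  rw [Finset.sum_congr rfl fun τ _ => step τ, ← Finset.mul_sum, sum_Phi_sq]

lemma offdiag_term (σ : Finset V) (v w : V) (hv : v ∈ σ) (hw : w ∈ σ.erase v) :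
    (sgn σ v * Phi X (j + 1) φ (σ.erase v)) * (sgn σ w * Phi X (j + 1) φ (σ.erase w))
      = -(restrictLink X φ ((σ.erase v).erase w) v
          * restrictLink X φ ((σ.erase v).erase w) w) := by
  have hwσ : w ∈ σ := Finset.mem_of_mem_erase hw
  have hwv : w ≠ v := (Finset.mem_erase.1 hw).1
  have hvτ : v ∉ (σ.erase v).erase w := fun hc =>
    Finset.notMem_erase v σ (Finset.mem_of_mem_erase hc)
  have hwτ : w ∉ (σ.erase v).erase w := Finset.notMem_erase _ _
  have hiv : insert v ((σ.erase v).erase w) = σ.erase w := by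
    rw [Finset.erase_right_comm]
    exact Finset.insert_erase (Finset.mem_erase.2 ⟨fun h => hwv h.symm, hv⟩)
  have hiw : insert w ((σ.erase v).erase w) = σ.erase v := Finset.insert_erase hw
  have fv : restrictLink X φ ((σ.erase v).erase w) v
      = sgn (σ.erase w) v * Phi X (j + 1) φ (σ.erase w) := by
    rw [restrict_eq X j φ, if_neg hvτ, hiv]
  have fw : restrictLink X φ ((σ.erase v).erase w) w
      = sgn (σ.erase v) w * Phi X (j + 1) φ (σ.erase v) := by
    rw [restrict_eq X j φ, if_neg hwτ, hiw]
  rw [fv, fw, show (sgn σ v * Phi X (j + 1) φ (σ.erase v))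
      * (sgn σ w * Phi X (j + 1) φ (σ.erase w))
    = (sgn σ v * sgn σ w) * (Phi X (j + 1) φ (σ.erase v) * Phi X (j + 1) φ (σ.erase w))
    from by ring, sgn_mul σ v w hv hwσ (fun h => hwv h.symm)]
  ring

lemma energy_eq (m : ℕ)
    (hdeg : ∀ σ ∈ X, σ.card = j + 1 →
      (X.filter fun η => σ ⊆ η ∧ η.card = j + 1 + 1).card = m) (τ : Finset V) :
    linkEnergy X τ (restrictLink X φ τ)
      = (m : ℝ) * (∑ v : V, restrictLink X φ τ v ^ 2)
        - ∑ u : V, ∑ v : V,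
            (if u ≠ v ∧ u ∉ τ ∧ v ∉ τ ∧ insert u (insert v τ) ∈ X
              then restrictLink X φ τ u * restrictLink X φ τ v else 0) := by
  unfold linkEnergy
  have e1 : ∀ u v : V,
      (if u ≠ v ∧ u ∉ τ ∧ v ∉ τ ∧ insert u (insert v τ) ∈ X
          then (restrictLink X φ τ v - restrictLink X φ τ u) ^ 2 else 0)
      = ((if u ≠ v ∧ u ∉ τ ∧ v ∉ τ ∧ insert u (insert v τ) ∈ X
            then restrictLink X φ τ u ^ 2 else 0)
          + (if u ≠ v ∧ u ∉ τ ∧ v ∉ τ ∧ insert u (insert v τ) ∈ X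
            then restrictLink X φ τ v ^ 2 else 0))
        - 2 * (if u ≠ v ∧ u ∉ τ ∧ v ∉ τ ∧ insert u (insert v τ) ∈ X
            then restrictLink X φ τ u * restrictLink X φ τ v else 0) := by
    intro u v
    split
    · ring
    · ring
  simp only [e1, Finset.sum_sub_distrib, Finset.sum_add_distrib, ← Finset.mul_sum]
  have symAB : (∑ u : V, ∑ v : V, if u ≠ v ∧ u ∉ τ ∧ v ∉ τ ∧ insert u (insert v τ) ∈ X
        then restrictLink X φ τ v ^ 2 else 0)
      = ∑ u : V, ∑ v : V, (if u ≠ v ∧ u ∉ τ ∧ v ∉ τ ∧ insert u (insert v τ) ∈ X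
        then restrictLink X φ τ u ^ 2 else 0) := by
    rw [Finset.sum_comm]
    refine Finset.sum_congr rfl fun u _ => Finset.sum_congr rfl fun v _ => ?_
    refine if_congr ?_ rfl rfl
    constructor
    · rintro ⟨h1, h2, h3, h4⟩
      exact ⟨h1.symm, h3, h2, by rwa [Finset.insert_comm]⟩
    · rintro ⟨h1, h2, h3, h4⟩
      exact ⟨h1.symm, h3, h2, by rwa [Finset.insert_comm]⟩
  have countA : (∑ u : V, ∑ v : V, if u ≠ v ∧ u ∉ τ ∧ v ∉ τ ∧ insert u (insert v τ) ∈ X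
        then restrictLink X φ τ u ^ 2 else 0)
      = (m : ℝ) * ∑ u : V, restrictLink X φ τ u ^ 2 := by
    rw [Finset.mul_sum]
    refine Finset.sum_congr rfl fun u _ => ?_
    rw [← Finset.sum_filter, Finset.sum_const, nsmul_eq_mul]
    by_cases hfu : restrictLink X φ τ u = 0
    · rw [hfu]; ring
    · have hc := restrict_cond X j φ hfu
      have hmem : ∀ v : V, v ∈ (univ.filter
            fun v => u ≠ v ∧ u ∉ τ ∧ v ∉ τ ∧ insert u (insert v τ) ∈ X)
          ↔ v ∉ insert u τ ∧ insert v (insert u τ) ∈ X := by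
        intro v
        simp only [Finset.mem_filter, Finset.mem_univ, true_and, Finset.mem_insert]
        constructor
        · rintro ⟨h1, h2, h3, h4⟩
          refine ⟨?_, by rwa [Finset.insert_comm]⟩
          push_neg
          exact ⟨fun e => h1 e.symm, h3⟩
        · rintro ⟨h1, h2⟩
          push_neg at h1
          exact ⟨fun e => h1.1 e.symm, hc.1, h1.2, by rwa [Finset.insert_comm]⟩
      have hcnt := count_eq X (j + 1) m hdeg (insert u τ) hc.2.1 hc.2.2 _ hmem
      have hcast : (((univ.filter
            fun v => u ≠ v ∧ u ∉ τ ∧ v ∉ τ ∧ insert u (insert v τ) ∈ X)).card : ℝ)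
          = (m : ℝ) := by exact_mod_cast hcnt
      rw [hcast]
  rw [symAB, countA]
  ring

lemma offdiag_massage (m : ℕ) (τ : Finset V) (v w : V) :
    (if v ≠ w ∧ v ∉ τ ∧ w ∉ τ ∧
          (insert v (insert w τ) ∈ X ∧ (insert v (insert w τ)).card = j + 1 + 1)
        then -(restrictLink X φ τ v * restrictLink X φ τ w) else 0)
      = -(if v ≠ w ∧ v ∉ τ ∧ w ∉ τ ∧ insert v (insert w τ) ∈ X
        then restrictLink X φ τ v * restrictLink X φ τ w else 0) := by
  by_cases hc2 : v ≠ w ∧ v ∉ τ ∧ w ∉ τ ∧ insert v (insert w τ) ∈ X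
  · by_cases hcard : (insert v (insert w τ)).card = j + 1 + 1
    · rw [if_pos ⟨hc2.1, hc2.2.1, hc2.2.2.1, hc2.2.2.2, hcard⟩, if_pos hc2]
    · rw [if_neg fun hh => hcard hh.2.2.2.2, if_pos hc2]
      have hfv : restrictLink X φ τ v = 0 := by
        by_contra hfv
        have hcv := restrict_cond X j φ hfv
        apply hcard
        have hvw : v ∉ insert w τ := by
          simp only [Finset.mem_insert]
          push_neg
          exact ⟨hc2.1, hc2.2.1⟩
        rw [Finset.card_insert_of_notMem hvw, Finset.card_insert_of_notMem hc2.2.2.1]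
        have := hcv.2.2
        rw [Finset.card_insert_of_notMem hcv.1] at this
        omega
      rw [hfv]
      ring
  · rw [if_neg fun hh => hc2 ⟨hh.1, hh.2.1, hh.2.2.1, hh.2.2.2.1⟩, if_neg hc2]
    ring

end Main

end Garland

open Garland

/-- **Theorem 6 (Garland's eigenvalue estimate).**  Let `X` be a finite pure `k`-dimensional
simplicial complex (`k = j+1 ≥ 1`) in which every `(k-1)`-simplex is contained in exactly `m`
`k`-simplices.  Let `λ(X) = min{λ₂(lk(X,τ)) : τ ∈ X(k-2)}`.  Then for every
`φ ∈ C^{k-1}(X)` with `d_{k-2}^* φ = 0` one has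
`‖d_{k-1}φ‖² ≥ (k·λ(X) - (k-1)·m)·‖φ‖²`.
(`lam` ranges over all lower bounds for the `λ₂`'s of the links, which is equivalent to
taking `lam = λ(X)`.) -/
theorem garland_estimate {V : Type} [Fintype V] [LinearOrder V]
    (X : Finset (Finset V)) (hdc : ∀ s ∈ X, ∀ t ⊆ s, t ∈ X)
    (k j : ℕ) (hkj : k = j + 1)
    (hpure : ∀ s ∈ X, ∃ t ∈ X, s ⊆ t ∧ t.card = k + 1)
    (m : ℕ)
    (hdeg : ∀ σ ∈ X, σ.card = k → (X.filter fun η => σ ⊆ η ∧ η.card = k + 1).card = m)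
    (lam : ℝ) (hlam : ∀ τ ∈ X, τ.card = j → lam ≤ linkLambda2 X τ)
    (φ : Cochain X (j + 1)) (hφ : dStar X j φ = 0) :
    ((k : ℝ) * lam - ((k : ℝ) - 1) * m) * normSq φ ≤ normSq (d X (j + 1) φ) := by
  subst hkj
  classical
  have h1 : normSq (d X (j + 1) φ)
      = ∑ σ ∈ univ.filter (fun s => s ∈ X ∧ s.card = j + 1 + 1),
          (∑ v ∈ σ, sgn σ v * Phi X (j + 1) φ (σ.erase v)) ^ 2 := by
    unfold normSq
    rw [← sum_subtype_eq X (j + 1 + 1)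
      (fun σ => (∑ v ∈ σ, sgn σ v * Phi X (j + 1) φ (σ.erase v)) ^ 2)]
    rfl
  have h2 : ∀ σ ∈ univ.filter (fun s => s ∈ X ∧ s.card = j + 1 + 1),
      (∑ v ∈ σ, sgn σ v * Phi X (j + 1) φ (σ.erase v)) ^ 2
        = (∑ v ∈ σ, Phi X (j + 1) φ (σ.erase v) ^ 2)
          + ∑ v ∈ σ, ∑ w ∈ σ.erase v,
              (sgn σ v * Phi X (j + 1) φ (σ.erase v))
                * (sgn σ w * Phi X (j + 1) φ (σ.erase w)) := by
    intro σ _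
    rw [pow_two, Finset.sum_mul_sum, ← Finset.sum_add_distrib]
    refine Finset.sum_congr rfl fun v hv => ?_
    rw [← Finset.add_sum_erase σ _ hv]
    congr 1
    rw [show (sgn σ v * Phi X (j + 1) φ (σ.erase v))
          * (sgn σ v * Phi X (j + 1) φ (σ.erase v))
        = sgn σ v ^ 2 * Phi X (j + 1) φ (σ.erase v) ^ 2 from by ring, sgn_sq, one_mul]
  have hoff : (∑ σ ∈ univ.filter (fun s => s ∈ X ∧ s.card = j + 1 + 1),
        ∑ v ∈ σ, ∑ w ∈ σ.erase v,
          (sgn σ v * Phi X (j + 1) φ (σ.erase v))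
            * (sgn σ w * Phi X (j + 1) φ (σ.erase w)))
      = - ∑ τ : Finset V, ∑ u : V, ∑ v : V,
          (if u ≠ v ∧ u ∉ τ ∧ v ∉ τ ∧ insert u (insert v τ) ∈ X
            then restrictLink X φ τ u * restrictLink X φ τ v else 0) := by
    calc (∑ σ ∈ univ.filter (fun s => s ∈ X ∧ s.card = j + 1 + 1),
        ∑ v ∈ σ, ∑ w ∈ σ.erase v,
          (sgn σ v * Phi X (j + 1) φ (σ.erase v))
            * (sgn σ w * Phi X (j + 1) φ (σ.erase w)))
        = ∑ σ ∈ univ.filter (fun s => s ∈ X ∧ s.card = j + 1 + 1),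
            ∑ v ∈ σ, ∑ w ∈ σ.erase v,
              -(restrictLink X φ ((σ.erase v).erase w) v
                * restrictLink X φ ((σ.erase v).erase w) w) :=
          Finset.sum_congr rfl fun σ _ => Finset.sum_congr rfl fun v hv =>
            Finset.sum_congr rfl fun w hw => offdiag_term X j φ σ v w hv hw
      _ = ∑ τ : Finset V, ∑ u : V, ∑ v : V,
            (if u ≠ v ∧ u ∉ τ ∧ v ∉ τ ∧
                (insert u (insert v τ) ∈ X ∧ (insert u (insert v τ)).card = j + 1 + 1)
              then -(restrictLink X φ τ u * restrictLink X φ τ v) else 0) :=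
          triple_reindex (fun s => s ∈ X ∧ s.card = j + 1 + 1)
            (fun τ u v => -(restrictLink X φ τ u * restrictLink X φ τ v))
      _ = ∑ τ : Finset V, ∑ u : V, ∑ v : V,
            -(if u ≠ v ∧ u ∉ τ ∧ v ∉ τ ∧ insert u (insert v τ) ∈ X
              then restrictLink X φ τ u * restrictLink X φ τ v else 0) :=
          Finset.sum_congr rfl fun τ _ => Finset.sum_congr rfl fun u _ =>
            Finset.sum_congr rfl fun v _ => offdiag_massage X j φ m τ u v
      _ = - ∑ τ : Finset V, ∑ u : V, ∑ v : V,
            (if u ≠ v ∧ u ∉ τ ∧ v ∉ τ ∧ insert u (insert v τ) ∈ X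
              then restrictLink X φ τ u * restrictLink X φ τ v else 0) := by
          simp only [Finset.sum_neg_distrib]
  have hdiag := diag_eq X j φ m hdeg
  have hsum := sum_restrict_sq X j φ
  have big : normSq (d X (j + 1) φ) = (m : ℝ) * normSq φ
      - ∑ τ : Finset V, ∑ u : V, ∑ v : V,
          (if u ≠ v ∧ u ∉ τ ∧ v ∉ τ ∧ insert u (insert v τ) ∈ X
            then restrictLink X φ τ u * restrictLink X φ τ v else 0) := by
    rw [h1, Finset.sum_congr rfl h2, Finset.sum_add_distrib, hdiag, hoff]
    ring
  have hS : (∑ τ : Finset V, ∑ u : V, ∑ v : V,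
        (if u ≠ v ∧ u ∉ τ ∧ v ∉ τ ∧ insert u (insert v τ) ∈ X
          then restrictLink X φ τ u * restrictLink X φ τ v else 0))
      = (m : ℝ) * (((j : ℝ) + 1) * normSq φ)
        - ∑ τ : Finset V, linkEnergy X τ (restrictLink X φ τ) := by
    have step : ∀ τ : Finset V, (∑ u : V, ∑ v : V,
          (if u ≠ v ∧ u ∉ τ ∧ v ∉ τ ∧ insert u (insert v τ) ∈ X
            then restrictLink X φ τ u * restrictLink X φ τ v else 0))
        = (m : ℝ) * (∑ v : V, restrictLink X φ τ v ^ 2)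
          - linkEnergy X τ (restrictLink X φ τ) := by
      intro τ
      have := energy_eq X j φ m hdeg τ
      linarith
    rw [Finset.sum_congr rfl fun τ _ => step τ, Finset.sum_sub_distrib,
      ← Finset.mul_sum, hsum]
  have hE : lam * (((j : ℝ) + 1) * normSq φ)
      ≤ ∑ τ : Finset V, linkEnergy X τ (restrictLink X φ τ) := by
    rw [← hsum, Finset.mul_sum]
    exact Finset.sum_le_sum fun τ _ => energy_lb X j φ m lam hdc hlam hφ τ
  rw [big, hS]
  push_cast
  linarith
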